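/- Let w = (w⁰, w¹) : [0,T] → ℝ² be a continuous path of bounded variation starting at the origin with w⁰ strictly increasing. If the iterated integral ∫_{0<t₁<t₂<t₃<T} dw¹(t₁) dw¹(t₂) dw⁰(t₃) equals 0, then ∫_{0<t₁<t₂<T} dw¹(t₁) dw⁰(t₂) = 0. -/

import Mathlib

open MeasureTheory

/-- Lebesgue–Stieltjes integral of `f` over `(s, t]` against `d(a - b)` for monotone
(Stieltjes) functions `a`, `b`. -/
noncomputable def sInt (a b : StieltjesFunction ℝ) (f : ℝ → ℝ) (s t : ℝ) : ℝ :=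
  (∫ r in Set.Ioc s t, f r ∂a.measure) - ∫ r in Set.Ioc s t, f r ∂b.measure

/-- Iterated Lebesgue–Stieltjes integral of the path with coordinates `w^j = a j - b j`
over the ordered simplex `{s < t₁ < ⋯ < t_k < t}`, indexed by the word `(i₁,…,i_k)`. -/
noncomputable def iterInt {d : ℕ} (a b : Fin (d + 1) → StieltjesFunction ℝ) :
    List (Fin (d + 1)) → ℝ → ℝ → ℝ
  | [], _, _ => 1
  | i :: α, s, t => sInt (a i) (b i) (fun r => iterInt a b α r t) s t

section AuxLemmas

open Set Filter


lemma aux_finite_restrict {μ : Measure ℝ} {s : Set ℝ} (h : μ s ≠ ⊤) :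
    IsFiniteMeasure (μ.restrict s) :=
  ⟨by rw [Measure.restrict_apply_univ]; exact h.lt_top⟩

lemma aux_integrableOn {f : ℝ → ℝ} (μ : Measure ℝ) {s t : ℝ} (hμ : μ (Ioc s t) ≠ ⊤)
    (hf : Measurable f) {C : ℝ} (hC : ∀ x ∈ Ioc s t, |f x| ≤ C) :
    IntegrableOn f (Ioc s t) μ := by
  haveI := aux_finite_restrict hμ
  refine Integrable.mono' (integrable_const C) hf.aestronglyMeasurable ?_
  rw [ae_restrict_iff' measurableSet_Ioc]
  exact ae_of_all _ fun x hx => by simpa [Real.norm_eq_abs] using hC x hx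

lemma aux_distrib_mono (μ : Measure ℝ) (c : ℝ) (h : ∀ r, μ (Ioc c r) ≠ ⊤) :
    Monotone fun r => (μ (Ioc c r)).toReal := fun r r' hrr' =>
  ENNReal.toReal_mono (h r') (measure_mono (Ioc_subset_Ioc_right hrr'))

lemma aux_distrib_integrableOn (μ ν : Measure ℝ) (c : ℝ) {s t : ℝ} (hμ : ∀ r, μ (Ioc c r) ≠ ⊤)
    (hν : ν (Ioc s t) ≠ ⊤) : IntegrableOn (fun r => (μ (Ioc c r)).toReal) (Ioc s t) ν :=
  aux_integrableOn ν hν (aux_distrib_mono μ c hμ).measurable (C := (μ (Ioc c t)).toReal)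
    fun x hx => by
      rw [abs_of_nonneg ENNReal.toReal_nonneg]
      exact ENNReal.toReal_mono (hμ t) (measure_mono (Ioc_subset_Ioc_right hx.2))

lemma aux_noAtoms (f : StieltjesFunction ℝ) (hf : Continuous f) : NullSingletonClass f.measure := by
  constructor
  intro x
  rw [f.measure_singleton]
  have : Function.leftLim (f : ℝ → ℝ) x = f x :=
    leftLim_eq_of_tendsto (h := nhdsLT_neBot x) ((hf.tendsto x).mono_left nhdsWithin_le_nhds)
  rw [this, sub_self, ENNReal.ofReal_zero]

lemma aux_split (μ : Measure ℝ) (hf : ∀ s t : ℝ, μ (Ioc s t) ≠ ⊤) {r v : ℝ}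
    (h1 : 0 ≤ r) (h2 : r ≤ v) :
    (μ (Ioc r v)).toReal = (μ (Ioc 0 v)).toReal - (μ (Ioc 0 r)).toReal := by
  have hU : Ioc 0 r ∪ Ioc r v = Ioc 0 v := Ioc_union_Ioc_eq_Ioc h1 h2
  rw [← hU, measure_union (Ioc_disjoint_Ioc_of_le le_rfl) measurableSet_Ioc,
    ENNReal.toReal_add (hf _ _) (hf _ _)]
  ring

lemma aux_swap (μ ν : Measure ℝ) {s t : ℝ} (hμ : μ (Ioc s t) ≠ ⊤) (hν : ν (Ioc s t) ≠ ⊤)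
    {φ ψ : ℝ → ℝ} (hφ : Measurable φ) (hψ : Measurable ψ)
    {C1 C2 : ℝ} (hC1 : 0 ≤ C1) (hC2 : 0 ≤ C2)
    (hφb : ∀ x ∈ Ioc s t, |φ x| ≤ C1) (hψb : ∀ x ∈ Ioc s t, |ψ x| ≤ C2) :
    ∫ r in Ioc s t, ψ r * (∫ u in Ioc r t, φ u ∂ν) ∂μ
      = ∫ u in Ioc s t, φ u * (∫ r in Ioo s u, ψ r ∂μ) ∂ν := by
  haveI := aux_finite_restrict hμ
  haveI := aux_finite_restrict hν
  set μ' := μ.restrict (Ioc s t) with hμ'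
  set ν' := ν.restrict (Ioc s t) with hν'
  set G : ℝ × ℝ → ℝ := fun p => if p.1 < p.2 then ψ p.1 * φ p.2 else 0 with hG
  have hGmeas : Measurable G :=
    Measurable.ite (measurableSet_lt measurable_fst measurable_snd)
      ((hψ.comp measurable_fst).mul (hφ.comp measurable_snd)) measurable_const
  have hnull : (μ'.prod ν') {p : ℝ × ℝ | ¬(p.1 ∈ Ioc s t ∧ p.2 ∈ Ioc s t)} = 0 := by
    have hsub : {p : ℝ × ℝ | ¬(p.1 ∈ Ioc s t ∧ p.2 ∈ Ioc s t)}
        ⊆ ((Ioc s t)ᶜ ×ˢ (univ : Set ℝ)) ∪ ((univ : Set ℝ) ×ˢ (Ioc s t)ᶜ) := by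
      intro p hp
      by_cases h1 : p.1 ∈ Ioc s t
      · exact Or.inr ⟨trivial, fun h2 => hp ⟨h1, h2⟩⟩
      · exact Or.inl ⟨h1, trivial⟩
    refine measure_mono_null hsub ?_
    have hz : μ' ((Ioc s t)ᶜ) = 0 := by
      rw [hμ', Measure.restrict_apply measurableSet_Ioc.compl, compl_inter_self, measure_empty]
    have hz' : ν' ((Ioc s t)ᶜ) = 0 := by
      rw [hν', Measure.restrict_apply measurableSet_Ioc.compl, compl_inter_self, measure_empty]
    refine measure_union_null ?_ ?_
    · rw [Measure.prod_prod, hz, zero_mul]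
    · rw [Measure.prod_prod, hz', mul_zero]
  have hae : ∀ᵐ p ∂(μ'.prod ν'), p.1 ∈ Ioc s t ∧ p.2 ∈ Ioc s t := by
    rw [ae_iff]; exact hnull
  have hInt : Integrable G (μ'.prod ν') := by
    refine Integrable.mono' (integrable_const (C2 * C1)) hGmeas.aestronglyMeasurable ?_
    filter_upwards [hae] with p hp
    rw [Real.norm_eq_abs, hG]
    dsimp only
    split_ifs with h
    · calc |ψ p.1 * φ p.2| = |ψ p.1| * |φ p.2| := abs_mul _ _
        _ ≤ C2 * C1 := mul_le_mul (hψb _ hp.1) (hφb _ hp.2) (abs_nonneg _) hC2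
    · simpa using mul_nonneg hC2 hC1
  have hswap := integral_integral_swap (μ := μ') (ν := ν') (f := fun r u => G (r, u)) hInt
  have hL : (∫ r, (∫ u, G (r, u) ∂ν') ∂μ') = ∫ r in Ioc s t, ψ r * (∫ u in Ioc r t, φ u ∂ν) ∂μ := by
    refine setIntegral_congr_fun measurableSet_Ioc fun r hr => ?_
    have hfun : (fun u => G (r, u)) = fun u => (Ioi r).indicator (fun u => ψ r * φ u) u := by
      funext u
      by_cases h : r < u <;> simp [hG, indicator, h, mem_Ioi]
    have h1 : (∫ u, G (r, u) ∂ν') = ∫ u in Ioi r, ψ r * φ u ∂ν' := by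
      rw [hfun, integral_indicator measurableSet_Ioi]
    have hset : Ioi r ∩ Ioc s t = Ioc r t := by
      ext u; simp only [mem_inter_iff, mem_Ioi, mem_Ioc]
      exact ⟨fun h => ⟨h.1, h.2.2⟩, fun h => ⟨h.1, hr.1.trans h.1, h.2⟩⟩
    rw [h1, hν', Measure.restrict_restrict measurableSet_Ioi, hset, integral_const_mul]
  have hR : (∫ u, (∫ r, G (r, u) ∂μ') ∂ν') = ∫ u in Ioc s t, φ u * (∫ r in Ioo s u, ψ r ∂μ) ∂ν := by
    refine setIntegral_congr_fun measurableSet_Ioc fun u hu => ?_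
    have hfun : (fun r => G (r, u)) = fun r => (Iio u).indicator (fun r => ψ r * φ u) r := by
      funext r
      by_cases h : r < u <;> simp [hG, indicator, h, mem_Iio]
    have h1 : (∫ r, G (r, u) ∂μ') = ∫ r in Iio u, ψ r * φ u ∂μ' := by
      rw [hfun, integral_indicator measurableSet_Iio]
    have hset : Iio u ∩ Ioc s t = Ioo s u := by
      ext r; simp only [mem_inter_iff, mem_Iio, mem_Ioo, mem_Ioc]
      exact ⟨fun h => ⟨h.2.1, h.1⟩, fun h => ⟨h.2, h.1, h.2.le.trans hu.2⟩⟩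
    rw [h1, hμ', Measure.restrict_restrict measurableSet_Iio, hset, integral_mul_const, mul_comm]
  rw [← hL, ← hR]
  exact hswap

lemma aux_one_swap (μ ν : Measure ℝ) [NullSingletonClass μ] {s t : ℝ}
    (hμ : ∀ u v : ℝ, μ (Ioc u v) ≠ ⊤) (hν : ∀ u v : ℝ, ν (Ioc u v) ≠ ⊤) :
    ∫ r in Ioc s t, (ν (Ioc r t)).toReal ∂μ = ∫ u in Ioc s t, (μ (Ioc s u)).toReal ∂ν := by
  have key := aux_swap μ ν (hμ s t) (hν s t) (φ := fun _ => (1:ℝ)) (ψ := fun _ => (1:ℝ))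
      measurable_const measurable_const zero_le_one zero_le_one
      (fun x _ => by norm_num) (fun x _ => by norm_num)
  simp only [one_mul, setIntegral_const, smul_eq_mul, mul_one, measureReal_def] at key
  have hIoo : ∀ u : ℝ, μ (Ioo s u) = μ (Ioc s u) := fun u => measure_congr Ioo_ae_eq_Ioc
  simp only [hIoo] at key
  exact key

lemma aux_sym (μ ν : Measure ℝ) [NullSingletonClass μ] {s t : ℝ} (hst : s ≤ t)
    (hμ : ∀ u v : ℝ, μ (Ioc u v) ≠ ⊤) (hν : ∀ u v : ℝ, ν (Ioc u v) ≠ ⊤) :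
    (∫ r in Ioc s t, (μ (Ioc s r)).toReal ∂ν) + (∫ r in Ioc s t, (ν (Ioc s r)).toReal ∂μ)
      = (μ (Ioc s t)).toReal * (ν (Ioc s t)).toReal := by
  haveI := aux_finite_restrict (hμ s t)
  have key := aux_one_swap μ ν (s := s) (t := t) hμ hν
  have hsplit : ∀ r ∈ Ioc s t, (ν (Ioc r t)).toReal
      = (ν (Ioc s t)).toReal - (ν (Ioc s r)).toReal := by
    intro r hr
    have hU : Ioc s r ∪ Ioc r t = Ioc s t := Ioc_union_Ioc_eq_Ioc hr.1.le hr.2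
    rw [← hU, measure_union (Ioc_disjoint_Ioc_of_le le_rfl) measurableSet_Ioc,
      ENNReal.toReal_add (hν _ _) (hν _ _)]
    ring
  rw [setIntegral_congr_fun measurableSet_Ioc hsplit] at key
  rw [integral_sub (integrable_const _)
      (aux_distrib_integrableOn ν μ s (fun r => hν s r) (hμ s t))] at key
  rw [setIntegral_const, smul_eq_mul, measureReal_def] at key
  linarith [key]

lemma aux_claimC (α β : Measure ℝ) [NullSingletonClass α] [NullSingletonClass β]
    (hα : ∀ u v : ℝ, α (Ioc u v) ≠ ⊤) (hβ : ∀ u v : ℝ, β (Ioc u v) ≠ ⊤) {v : ℝ} (hv : 0 ≤ v) :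
    (∫ r in Ioc 0 v, ((α (Ioc 0 r)).toReal - (β (Ioc 0 r)).toReal) ∂α)
      - (∫ r in Ioc 0 v, ((α (Ioc 0 r)).toReal - (β (Ioc 0 r)).toReal) ∂β)
      = ((α (Ioc 0 v)).toReal - (β (Ioc 0 v)).toReal)
        * ((α (Ioc 0 v)).toReal - (β (Ioc 0 v)).toReal) / 2 := by
  have iXα : IntegrableOn (fun r => (α (Ioc 0 r)).toReal) (Ioc 0 v) α :=
    aux_distrib_integrableOn α α 0 (fun r => hα 0 r) (hα 0 v)
  have iYα : IntegrableOn (fun r => (β (Ioc 0 r)).toReal) (Ioc 0 v) α :=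
    aux_distrib_integrableOn β α 0 (fun r => hβ 0 r) (hα 0 v)
  have iXβ : IntegrableOn (fun r => (α (Ioc 0 r)).toReal) (Ioc 0 v) β :=
    aux_distrib_integrableOn α β 0 (fun r => hα 0 r) (hβ 0 v)
  have iYβ : IntegrableOn (fun r => (β (Ioc 0 r)).toReal) (Ioc 0 v) β :=
    aux_distrib_integrableOn β β 0 (fun r => hβ 0 r) (hβ 0 v)
  rw [integral_sub iXα iYα, integral_sub iXβ iYβ]
  have e1 := aux_sym α α (s := 0) (t := v) hv hα hα
  have e2 := aux_sym β β (s := 0) (t := v) hv hβ hβ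
  have e3 := aux_sym α β (s := 0) (t := v) hv hα hβ
  linear_combination e1 / 2 + e2 / 2 - e3

lemma aux_cumanti (μ ν τ : Measure ℝ) {T : ℝ}
    (hμ : ∀ u v : ℝ, μ (Ioc u v) ≠ ⊤) (hν : ∀ u v : ℝ, ν (Ioc u v) ≠ ⊤)
    (hτ : τ (Ioc 0 T) ≠ ⊤) :
    IntegrableOn (fun r : ℝ => ∫ v in Ioc (max r 0) T, (μ (Ioc 0 v)).toReal ∂ν)
      (Ioc 0 T) τ := by
  have hnn : ∀ x : ℝ, 0 ≤ (μ (Ioc 0 x)).toReal := fun x => ENNReal.toReal_nonneg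
  have hint : ∀ r : ℝ, IntegrableOn (fun v => (μ (Ioc 0 v)).toReal) (Ioc (max r 0) T) ν :=
    fun r => aux_distrib_integrableOn μ ν 0 (fun x => hμ 0 x) (hν _ T)
  have hanti : Antitone fun r : ℝ => ∫ v in Ioc (max r 0) T, (μ (Ioc 0 v)).toReal ∂ν := by
    intro r r' h
    refine setIntegral_mono_set (hint r) (Filter.Eventually.of_forall fun x => hnn x) ?_
    exact HasSubset.Subset.eventuallyLE (Ioc_subset_Ioc_left (max_le_max h le_rfl))
  refine aux_integrableOn τ hτ hanti.measurable
    (C := ∫ v in Ioc 0 T, (μ (Ioc 0 v)).toReal ∂ν) fun x hx => ?_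
  rw [abs_of_nonneg (setIntegral_nonneg measurableSet_Ioc fun y _ => hnn y)]
  refine setIntegral_mono_set (by simpa using hint 0) (Filter.Eventually.of_forall fun y => hnn y) ?_
  exact HasSubset.Subset.eventuallyLE (Ioc_subset_Ioc_left (le_max_right x 0))

lemma aux_cummono (μ τ ν : Measure ℝ) {T : ℝ}
    (hμ : ∀ u v : ℝ, μ (Ioc u v) ≠ ⊤) (hτ : ∀ u v : ℝ, τ (Ioc u v) ≠ ⊤)
    (hν : ν (Ioc 0 T) ≠ ⊤) :
    IntegrableOn (fun v : ℝ => ∫ r in Ioc 0 v, (μ (Ioc 0 r)).toReal ∂τ) (Ioc 0 T) ν := by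
  have hnn : ∀ x : ℝ, 0 ≤ (μ (Ioc 0 x)).toReal := fun x => ENNReal.toReal_nonneg
  have hint : ∀ v : ℝ, IntegrableOn (fun r => (μ (Ioc 0 r)).toReal) (Ioc 0 v) τ :=
    fun v => aux_distrib_integrableOn μ τ 0 (fun x => hμ 0 x) (hτ 0 v)
  have hmono : Monotone fun v : ℝ => ∫ r in Ioc 0 v, (μ (Ioc 0 r)).toReal ∂τ := by
    intro v v' h
    refine setIntegral_mono_set (hint v') (Filter.Eventually.of_forall fun x => hnn x) ?_
    exact HasSubset.Subset.eventuallyLE (Ioc_subset_Ioc_right h)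
  refine aux_integrableOn ν hν hmono.measurable
    (C := ∫ r in Ioc 0 T, (μ (Ioc 0 r)).toReal ∂τ) fun x hx => ?_
  rw [abs_of_nonneg (setIntegral_nonneg measurableSet_Ioc fun y _ => hnn y)]
  exact hmono hx.2


end AuxLemmas

section MainProof

open Set Filter

/-- For a continuous bounded-variation path `w = (w⁰, w¹) : [0,T] → ℝ²` starting at the
origin with `w⁰` strictly increasing, the vanishing of
`∫_{0<t₁<t₂<t₃<T} dw¹ dw¹ dw⁰` forces the vanishing of `∫_{0<t₁<t₂<T} dw¹ dw⁰`. -/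
theorem vanishing_iterated_integral_of_strictMono_time
    (T : ℝ) (hT : 0 < T) (a b : Fin 2 → StieltjesFunction ℝ)
    (ha : ∀ j, Continuous (a j : ℝ → ℝ)) (hb : ∀ j, Continuous (b j : ℝ → ℝ))
    (w : ℝ → Fin 2 → ℝ) (hw : ∀ j r, w r j = a j r - b j r)
    (hstart : w 0 = 0)
    (hmono : StrictMonoOn (fun r => w r 0) (Set.Icc 0 T))
    (hvanish : iterInt a b [1, 1, 0] 0 T = 0) :
    iterInt a b [1, 0] 0 T = 0 := by
  classical
  have hT' : (0:ℝ) ≤ T := hT.le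
  have h01 : w 0 1 = 0 := by rw [hstart]; rfl
  have hW1cont : Continuous fun u => w u 1 := by
    have : (fun u => w u 1) = fun u => a 1 u - b 1 u := funext fun u => hw 1 u
    rw [this]; exact (ha 1).sub (hb 1)
  have hW1meas : Measurable fun u => w u 1 := hW1cont.measurable
  obtain ⟨CW, hCW⟩ := isCompact_Icc.exists_bound_of_continuousOn (s := Icc (0:ℝ) T)
      hW1cont.continuousOn
  have hCW0 : 0 ≤ CW := le_trans (norm_nonneg _) (hCW 0 ⟨le_rfl, hT'⟩)
  have hCW' : ∀ x ∈ Ioc (0:ℝ) T, |w x 1| ≤ CW := fun x hx => hCW x ⟨hx.1.le, hx.2⟩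
  have hfin : ∀ (f : StieltjesFunction ℝ) (u v : ℝ), f.measure (Ioc u v) ≠ ⊤ := fun f u v => by
    rw [f.measure_Ioc]; exact ENNReal.ofReal_ne_top
  haveI : NullSingletonClass (a 1).measure := aux_noAtoms _ (ha 1)
  haveI : NullSingletonClass (b 1).measure := aux_noAtoms _ (hb 1)
  have hIocS : ∀ (f : StieltjesFunction ℝ) (u v : ℝ), u ≤ v →
      (f.measure (Ioc u v)).toReal = f v - f u := fun f u v huv => by
    rw [f.measure_Ioc, ENNReal.toReal_ofReal (sub_nonneg.2 (f.mono huv))]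
  have hW1Ioc : ∀ u v : ℝ, u ≤ v →
      ((a 1).measure (Ioc u v)).toReal - ((b 1).measure (Ioc u v)).toReal = w v 1 - w u 1 := by
    intro u v huv
    rw [hIocS _ _ _ huv, hIocS _ _ _ huv, hw 1 u, hw 1 v]; ring
  -- the time Stieltjes function g
  have hclamp_cont : Continuous fun r : ℝ => max 0 (min r T) :=
    continuous_const.max (continuous_id.min continuous_const)
  have hclamp_mem : ∀ r : ℝ, max 0 (min r T) ∈ Icc (0:ℝ) T :=
    fun r => ⟨le_max_left _ _, max_le hT' (min_le_right _ _)⟩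
  have hgc : Continuous fun r : ℝ => a 0 (max 0 (min r T)) - b 0 (max 0 (min r T)) :=
    ((ha 0).comp hclamp_cont).sub ((hb 0).comp hclamp_cont)
  have hgm : Monotone fun r : ℝ => a 0 (max 0 (min r T)) - b 0 (max 0 (min r T)) := by
    intro r r' h
    have hle : max 0 (min r T) ≤ max 0 (min r' T) := max_le_max le_rfl (min_le_min h le_rfl)
    have := hmono.monotoneOn (hclamp_mem r) (hclamp_mem r') hle
    simpa only [hw 0] using this
  let g : StieltjesFunction ℝ :=
    { toFun := fun r => a 0 (max 0 (min r T)) - b 0 (max 0 (min r T))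
      mono' := hgm
      right_continuous' := fun x => hgc.continuousWithinAt }
  have hgval : ∀ r : ℝ, 0 ≤ r → r ≤ T → (g : ℝ → ℝ) r = w r 0 := by
    intro r h1 h2
    show a 0 (max 0 (min r T)) - b 0 (max 0 (min r T)) = w r 0
    rw [min_eq_left h2, max_eq_right h1, hw 0 r]
  have hνfin : ∀ u v : ℝ, g.measure (Ioc u v) ≠ ⊤ := hfin g
  -- the innermost integral
  have inner0 : ∀ r : ℝ, 0 ≤ r → r ≤ T →
      ((∫ u in Ioc r T, (1:ℝ) ∂(a 0).measure) - ∫ u in Ioc r T, (1:ℝ) ∂(b 0).measure)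
        = (g.measure (Ioc r T)).toReal := by
    intro r h1 h2
    rw [setIntegral_const, setIntegral_const, smul_eq_mul, smul_eq_mul, mul_one, mul_one, measureReal_def, measureReal_def,
      hIocS _ _ _ h2, hIocS _ _ _ h2, hIocS g _ _ h2, hgval r h1 h2, hgval T hT' le_rfl,
      hw 0 r, hw 0 T]
    ring
  -- key identity for the order-2 integral
  have swapA := aux_one_swap (a 1).measure g.measure (s := 0) (t := T) (hfin (a 1)) (hfin g)
  have swapB := aux_one_swap (b 1).measure g.measure (s := 0) (t := T) (hfin (b 1)) (hfin g)
  have keyB : iterInt a b [1, 0] 0 T = ∫ u in Ioc 0 T, w u 1 ∂g.measure := by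
    have h1 : iterInt a b [1, 0] 0 T
        = (∫ r in Ioc 0 T, (g.measure (Ioc r T)).toReal ∂(a 1).measure)
          - ∫ r in Ioc 0 T, (g.measure (Ioc r T)).toReal ∂(b 1).measure := by
      simp only [iterInt, sInt]
      exact congrArg₂ (· - ·)
        (setIntegral_congr_fun measurableSet_Ioc fun r hr => inner0 r hr.1.le hr.2)
        (setIntegral_congr_fun measurableSet_Ioc fun r hr => inner0 r hr.1.le hr.2)
    rw [h1, swapA, swapB, ← integral_sub
      (aux_distrib_integrableOn (a 1).measure g.measure 0 (fun x => hfin _ 0 x) (hνfin 0 T))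
      (aux_distrib_integrableOn (b 1).measure g.measure 0 (fun x => hfin _ 0 x) (hνfin 0 T))]
    refine setIntegral_congr_fun measurableSet_Ioc fun u hu => ?_
    rw [hW1Ioc 0 u hu.1.le, h01, sub_zero]
  -- integrability of the distribution functions against g.measure
  have hXintν : ∀ r : ℝ,
      IntegrableOn (fun v => ((a 1).measure (Ioc 0 v)).toReal) (Ioc r T) g.measure :=
    fun r => aux_distrib_integrableOn (a 1).measure g.measure 0 (fun x => hfin _ 0 x) (hνfin r T)
  have hYintν : ∀ r : ℝ,
      IntegrableOn (fun v => ((b 1).measure (Ioc 0 v)).toReal) (Ioc r T) g.measure :=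
    fun r => aux_distrib_integrableOn (b 1).measure g.measure 0 (fun x => hfin _ 0 x) (hνfin r T)
  set F : ℝ → ℝ := fun r =>
    (∫ v in Ioc (max r 0) T, ((a 1).measure (Ioc 0 v)).toReal ∂g.measure)
      - (∫ v in Ioc (max r 0) T, ((b 1).measure (Ioc 0 v)).toReal ∂g.measure)
      - w r 1 * (g.measure (Ioc r T)).toReal with hFdef
  have hZdecomp : ∀ r ∈ Ioc (0:ℝ) T, (∫ v in Ioc r T, w v 1 ∂g.measure)
      = (∫ v in Ioc r T, ((a 1).measure (Ioc 0 v)).toReal ∂g.measure)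
        - ∫ v in Ioc r T, ((b 1).measure (Ioc 0 v)).toReal ∂g.measure := by
    intro r hr
    rw [← integral_sub (hXintν r) (hYintν r)]
    refine setIntegral_congr_fun measurableSet_Ioc fun v hv => ?_
    rw [hW1Ioc 0 v (hr.1.trans hv.1).le, h01, sub_zero]
  have hF : ∀ r ∈ Ioc (0:ℝ) T,
      ((∫ u in Ioc r T, ((∫ x in Ioc u T, (1:ℝ) ∂(a 0).measure)
          - ∫ x in Ioc u T, (1:ℝ) ∂(b 0).measure) ∂(a 1).measure)
        - ∫ u in Ioc r T, ((∫ x in Ioc u T, (1:ℝ) ∂(a 0).measure)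
          - ∫ x in Ioc u T, (1:ℝ) ∂(b 0).measure) ∂(b 1).measure)
        = F r := by
    intro r hr
    have hsub : ∀ u ∈ Ioc r T, ((∫ x in Ioc u T, (1:ℝ) ∂(a 0).measure)
        - ∫ x in Ioc u T, (1:ℝ) ∂(b 0).measure) = (g.measure (Ioc u T)).toReal :=
      fun u hu => inner0 u (hr.1.trans hu.1).le hu.2
    have hrT : Ioc r T ⊆ Ioc 0 T := Ioc_subset_Ioc_left hr.1.le
    haveI := aux_finite_restrict (hνfin r T)
    rw [setIntegral_congr_fun measurableSet_Ioc hsub,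
      setIntegral_congr_fun measurableSet_Ioc hsub,
      aux_one_swap (a 1).measure g.measure (s := r) (t := T) (hfin (a 1)) (hfin g),
      aux_one_swap (b 1).measure g.measure (s := r) (t := T) (hfin (b 1)) (hfin g),
      ← integral_sub
        (aux_distrib_integrableOn (a 1).measure g.measure r (fun x => hfin _ r x) (hνfin r T))
        (aux_distrib_integrableOn (b 1).measure g.measure r (fun x => hfin _ r x) (hνfin r T)),
      setIntegral_congr_fun measurableSet_Ioc
        (fun v hv => hW1Ioc r v hv.1.le :
          EqOn (fun v => ((a 1).measure (Ioc r v)).toReal - ((b 1).measure (Ioc r v)).toReal)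
            (fun v => w v 1 - w r 1) (Ioc r T)),
      integral_sub (aux_integrableOn g.measure (hνfin r T) hW1meas (C := CW)
        fun x hx => hCW' x (hrT hx)) (integrable_const _),
      setIntegral_const, smul_eq_mul, measureReal_def]
    simp only [hFdef]
    rw [max_eq_left hr.1.le, ← hZdecomp r hr]
    ring
  -- generic computation of ∫ F dτ
  have hanti : Antitone fun r : ℝ => (g.measure (Ioc r T)).toReal := fun r r' h =>
    ENNReal.toReal_mono (hνfin r T) (measure_mono (Ioc_subset_Ioc_left h))
  have hcomp : ∀ (τ : Measure ℝ) [NullSingletonClass τ], (∀ u v : ℝ, τ (Ioc u v) ≠ ⊤) →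
      ∫ r in Ioc 0 T, F r ∂τ
        = (∫ u in Ioc 0 T, w u 1 * (τ (Ioc 0 u)).toReal ∂g.measure)
          - ∫ u in Ioc 0 T, (∫ x in Ioc 0 u, w x 1 ∂τ) ∂g.measure := by
    intro τ hinst hτ
    have hi1 := aux_cumanti (a 1).measure g.measure τ (hfin _) (hfin g) (hτ 0 T)
    have hi2 := aux_cumanti (b 1).measure g.measure τ (hfin _) (hfin g) (hτ 0 T)
    have hi3 : IntegrableOn (fun r => w r 1 * (g.measure (Ioc r T)).toReal) (Ioc 0 T) τ :=
      aux_integrableOn τ (hτ 0 T) (hW1meas.mul hanti.measurable)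
        (C := CW * (g.measure (Ioc 0 T)).toReal) fun x hx => by
          rw [abs_mul, abs_of_nonneg (ENNReal.toReal_nonneg)]
          exact mul_le_mul (hCW' x hx)
            (ENNReal.toReal_mono (hνfin 0 T) (measure_mono (Ioc_subset_Ioc_left hx.1.le)))
            ENNReal.toReal_nonneg hCW0
    have e1 : ∫ r in Ioc 0 T,
        ((∫ v in Ioc (max r 0) T, ((a 1).measure (Ioc 0 v)).toReal ∂g.measure)
          - ∫ v in Ioc (max r 0) T, ((b 1).measure (Ioc 0 v)).toReal ∂g.measure) ∂τ
        = ∫ u in Ioc 0 T, w u 1 * (τ (Ioc 0 u)).toReal ∂g.measure := by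
      have swap1 := aux_swap τ g.measure (hτ 0 T) (hνfin 0 T)
        (φ := fun v => w v 1) (ψ := fun _ => (1:ℝ)) hW1meas measurable_const hCW0 zero_le_one
        hCW' (fun x _ => by norm_num)
      simp only [one_mul, setIntegral_const, smul_eq_mul, mul_one, measureReal_def] at swap1
      have hoo : ∀ u : ℝ, τ (Ioo 0 u) = τ (Ioc 0 u) := fun u => measure_congr Ioo_ae_eq_Ioc
      simp only [hoo] at swap1
      rw [← swap1]
      refine setIntegral_congr_fun measurableSet_Ioc fun r hr => ?_
      rw [max_eq_left hr.1.le]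
      exact (hZdecomp r hr).symm
    have e2 : ∫ r in Ioc 0 T, w r 1 * (g.measure (Ioc r T)).toReal ∂τ
        = ∫ u in Ioc 0 T, (∫ x in Ioc 0 u, w x 1 ∂τ) ∂g.measure := by
      have swap2 := aux_swap τ g.measure (hτ 0 T) (hνfin 0 T)
        (φ := fun _ => (1:ℝ)) (ψ := fun r => w r 1) measurable_const hW1meas zero_le_one hCW0
        (fun x _ => by norm_num) hCW'
      simp only [one_mul, setIntegral_const, smul_eq_mul, mul_one, measureReal_def] at swap2
      rw [swap2]
      refine setIntegral_congr_fun measurableSet_Ioc fun u hu => ?_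
      rw [Measure.restrict_congr_set Ioo_ae_eq_Ioc]
    have hi12 : IntegrableOn (fun r : ℝ =>
        (∫ v in Ioc (max r 0) T, ((a 1).measure (Ioc 0 v)).toReal ∂g.measure)
          - ∫ v in Ioc (max r 0) T, ((b 1).measure (Ioc 0 v)).toReal ∂g.measure)
        (Ioc 0 T) τ := hi1.sub hi2
    simp only [hFdef]
    rw [integral_sub hi12 hi3, e1, e2]
  -- pointwise square identity
  have hclaim : ∀ u : ℝ, 0 < u →
      ((∫ x in Ioc 0 u, w x 1 ∂(a 1).measure) - ∫ x in Ioc 0 u, w x 1 ∂(b 1).measure)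
        = w u 1 * w u 1 / 2 := by
    intro u hu
    have hptA : ∀ τ : Measure ℝ, (∫ x in Ioc 0 u, w x 1 ∂τ)
        = ∫ x in Ioc 0 u, (((a 1).measure (Ioc 0 x)).toReal
            - ((b 1).measure (Ioc 0 x)).toReal) ∂τ := by
      intro τ
      refine (setIntegral_congr_fun measurableSet_Ioc fun x hx => ?_).symm
      rw [hW1Ioc 0 x hx.1.le, h01, sub_zero]
    have := aux_claimC (a 1).measure (b 1).measure (hfin _) (hfin _) hu.le
    rw [← hptA, ← hptA] at this
    rw [this, hW1Ioc 0 u hu.le, h01, sub_zero]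
  -- the order-3 identity
  have keyD : iterInt a b [1, 1, 0] 0 T
      = ∫ v in Ioc 0 T, w v 1 * w v 1 / 2 ∂g.measure := by
    have h1 : iterInt a b [1, 1, 0] 0 T
        = (∫ r in Ioc 0 T, F r ∂(a 1).measure) - ∫ r in Ioc 0 T, F r ∂(b 1).measure := by
      simp only [iterInt, sInt]
      exact congrArg₂ (· - ·)
        (setIntegral_congr_fun measurableSet_Ioc hF)
        (setIntegral_congr_fun measurableSet_Ioc hF)
    have i1A : IntegrableOn (fun u => w u 1 * ((a 1).measure (Ioc 0 u)).toReal)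
        (Ioc 0 T) g.measure :=
      aux_integrableOn _ (hνfin 0 T)
        (hW1meas.mul (aux_distrib_mono _ 0 (fun x => hfin _ 0 x)).measurable)
        (C := CW * ((a 1).measure (Ioc 0 T)).toReal) fun x hx => by
          rw [abs_mul, abs_of_nonneg ENNReal.toReal_nonneg]
          exact mul_le_mul (hCW' x hx)
            (ENNReal.toReal_mono (hfin _ 0 T) (measure_mono (Ioc_subset_Ioc_right hx.2)))
            ENNReal.toReal_nonneg hCW0
    have i1B : IntegrableOn (fun u => w u 1 * ((b 1).measure (Ioc 0 u)).toReal)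
        (Ioc 0 T) g.measure :=
      aux_integrableOn _ (hνfin 0 T)
        (hW1meas.mul (aux_distrib_mono _ 0 (fun x => hfin _ 0 x)).measurable)
        (C := CW * ((b 1).measure (Ioc 0 T)).toReal) fun x hx => by
          rw [abs_mul, abs_of_nonneg ENNReal.toReal_nonneg]
          exact mul_le_mul (hCW' x hx)
            (ENNReal.toReal_mono (hfin _ 0 T) (measure_mono (Ioc_subset_Ioc_right hx.2)))
            ENNReal.toReal_nonneg hCW0
    have hptfun : ∀ τ : Measure ℝ, (∀ u v : ℝ, τ (Ioc u v) ≠ ⊤) →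
        (fun u : ℝ => ∫ x in Ioc 0 u, w x 1 ∂τ)
          = fun u : ℝ => (∫ x in Ioc 0 u, ((a 1).measure (Ioc 0 x)).toReal ∂τ)
              - ∫ x in Ioc 0 u, ((b 1).measure (Ioc 0 x)).toReal ∂τ := by
      intro τ hτ
      funext u
      rw [← integral_sub (aux_distrib_integrableOn (a 1).measure τ 0 (fun x => hfin _ 0 x) (hτ 0 u))
        (aux_distrib_integrableOn (b 1).measure τ 0 (fun x => hfin _ 0 x) (hτ 0 u))]
      refine setIntegral_congr_fun measurableSet_Ioc fun x hx => ?_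
      rw [hW1Ioc 0 x hx.1.le, h01, sub_zero]
    have i2A : IntegrableOn (fun u => ∫ x in Ioc 0 u, w x 1 ∂(a 1).measure)
        (Ioc 0 T) g.measure := by
      rw [hptfun (a 1).measure (hfin _)]
      exact (aux_cummono (a 1).measure (a 1).measure g.measure (hfin _) (hfin _) (hνfin 0 T)).sub
        (aux_cummono (b 1).measure (a 1).measure g.measure (hfin _) (hfin _) (hνfin 0 T))
    have i2B : IntegrableOn (fun u => ∫ x in Ioc 0 u, w x 1 ∂(b 1).measure)
        (Ioc 0 T) g.measure := by
      rw [hptfun (b 1).measure (hfin _)]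
      exact (aux_cummono (a 1).measure (b 1).measure g.measure (hfin _) (hfin _) (hνfin 0 T)).sub
        (aux_cummono (b 1).measure (b 1).measure g.measure (hfin _) (hfin _) (hνfin 0 T))
    rw [h1, hcomp (a 1).measure (hfin _), hcomp (b 1).measure (hfin _)]
    rw [show ∀ p q r s : ℝ, (p - q) - (r - s) = (p - r) - (q - s) from fun p q r s => by ring]
    have j1 : IntegrableOn (fun u : ℝ => w u 1 * ((a 1).measure (Ioc 0 u)).toReal
        - w u 1 * ((b 1).measure (Ioc 0 u)).toReal) (Ioc 0 T) g.measure := i1A.sub i1B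
    have j2 : IntegrableOn (fun u : ℝ => (∫ x in Ioc 0 u, w x 1 ∂(a 1).measure)
        - ∫ x in Ioc 0 u, w x 1 ∂(b 1).measure) (Ioc 0 T) g.measure := i2A.sub i2B
    rw [← integral_sub i1A i1B, ← integral_sub i2A i2B, ← integral_sub j1 j2]
    refine setIntegral_congr_fun measurableSet_Ioc fun u hu => ?_
    have h2 := hW1Ioc 0 u hu.1.le
    rw [h01, sub_zero] at h2
    rw [hclaim u hu.1]
    linear_combination w u 1 * h2
  -- conclusion
  have hint : IntegrableOn (fun v => w v 1 * w v 1 / 2) (Ioc 0 T) g.measure :=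
    aux_integrableOn _ (hνfin 0 T) ((hW1meas.mul hW1meas).div_const 2)
      (C := CW * CW / 2) fun x hx => by
        rw [abs_div, abs_mul, abs_two]
        have := mul_le_mul (hCW' x hx) (hCW' x hx) (abs_nonneg _) hCW0
        linarith
  have h0 : ∫ v in Ioc 0 T, w v 1 * w v 1 / 2 ∂g.measure = 0 := by rw [← keyD]; exact hvanish
  have hae := (integral_eq_zero_iff_of_nonneg (fun v => div_nonneg (mul_self_nonneg _) (by norm_num)) hint).1 h0
  have hW0ae : (fun v => w v 1) =ᵐ[g.measure.restrict (Ioc 0 T)] 0 := by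
    filter_upwards [hae] with v hv
    have hzero : w v 1 * w v 1 = 0 := by
      have : w v 1 * w v 1 / 2 = 0 := hv
      linarith
    exact mul_self_eq_zero.mp hzero
  rw [keyB]
  calc (∫ u in Ioc 0 T, w u 1 ∂g.measure) = ∫ u in Ioc 0 T, (0:ℝ) ∂g.measure :=
        integral_congr_ae hW0ae
    _ = 0 := by simp

end MainProof
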